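/- The Laplace mechanism satisfies ε-differential privacy: for a query f with sensitivity ΔS (i.e., |f(D)−f(D')| ≤ ΔS for all neighboring D, D'), the mechanism M(D) = f(D) + Lap(ΔS/ε) satisfies that for all neighboring D, D' and all measurable sets Ω, Pr[M(D)∈Ω] ≤ e^ε·Pr[M(D')∈Ω]. -/

import Mathlib

open scoped BigOperators

/-- The density of the Laplace mechanism output at `y`, on dataset `x`:
`f x + Lap(ΔS/ε)` has density `(1/(2b))·exp(−|y − f x|/b)` with `b = ΔS/ε`,
i.e. `(ε/(2ΔS))·exp(−|y − f x|·ε/ΔS)`. -/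
noncomputable def laplaceDensity {D : Type*} (f : D → ℝ) (ΔS ε : ℝ)
    (x : D) (y : ℝ) : ℝ :=
  ε / (2 * ΔS) * Real.exp (-|y - f x| * ε / ΔS)

open MeasureTheory Set

/-- `exp (-(c * |y|))` is integrable for `c > 0`. -/
lemma integrable_exp_neg_mul_abs {c : ℝ} (hc : 0 < c) :
    Integrable (fun y : ℝ => Real.exp (-(c * |y|))) := by
  have hIoi : IntegrableOn (fun y : ℝ => Real.exp (-(c * |y|))) (Ioi 0) := by
    refine (exp_neg_integrableOn_Ioi 0 hc).congr_fun (fun y hy => ?_) measurableSet_Ioi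
    rw [abs_of_pos hy, ← neg_mul]
  have hIic : IntegrableOn (fun y : ℝ => Real.exp (-(c * |y|))) (Iic 0) := by
    rw [← Measure.map_neg_eq_self (volume : Measure ℝ)]
    have m : MeasurableEmbedding fun x : ℝ => -x :=
      (Homeomorph.neg ℝ).measurableEmbedding
    rw [m.integrableOn_map_iff]
    simp_rw [Function.comp_def, abs_neg, neg_preimage, neg_Iic, neg_zero]
    exact Iff.mpr integrableOn_Ici_iff_integrableOn_Ioi hIoi
  have := hIic.union hIoi
  rwa [Iic_union_Ioi, integrableOn_univ] at this

/-- The Laplace density is integrable. -/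
lemma integrable_laplaceDensity {D : Type*} (f : D → ℝ) (ΔS ε : ℝ)
    (hΔS : 0 < ΔS) (hε : 0 < ε) (x : D) :
    Integrable (fun y => laplaceDensity f ΔS ε x y) := by
  have hc : 0 < ε / ΔS := div_pos hε hΔS
  have h1 : Integrable (fun y : ℝ => Real.exp (-(ε / ΔS * |y - f x|))) :=
    (integrable_exp_neg_mul_abs hc).comp_sub_right (f x)
  have h2 := h1.const_mul (ε / (2 * ΔS))
  have he : (fun y => laplaceDensity f ΔS ε x y)
      = fun y : ℝ => ε / (2 * ΔS) * Real.exp (-(ε / ΔS * |y - f x|)) := by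
    funext y
    unfold laplaceDensity
    congr 1
    congr 1
    field_simp
  rw [he]
  exact h2

theorem laplace_mechanism_private
    {D : Type*} (Neighbor : D → D → Prop) (f : D → ℝ) (ΔS ε : ℝ)
    (hΔS : 0 < ΔS) (hε : 0 < ε)
    (hsens : ∀ x x', Neighbor x x' → |f x - f x'| ≤ ΔS) :
    ∀ x x', Neighbor x x' → ∀ Ω : Set ℝ, MeasurableSet Ω →
      (∫ y in Ω, laplaceDensity f ΔS ε x y)
        ≤ Real.exp ε * ∫ y in Ω, laplaceDensity f ΔS ε x' y := by
  intro x x' hN Ω hΩ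
  have hpt : ∀ y : ℝ, laplaceDensity f ΔS ε x y
      ≤ Real.exp ε * laplaceDensity f ΔS ε x' y := by
    intro y
    unfold laplaceDensity
    rw [mul_comm (Real.exp ε), mul_assoc, ← Real.exp_add]
    have hcoef : 0 ≤ ε / (2 * ΔS) := le_of_lt (div_pos hε (by linarith))
    refine mul_le_mul_of_nonneg_left (Real.exp_le_exp.mpr ?_) hcoef
    have h1 : |y - f x'| ≤ |y - f x| + ΔS :=
      (abs_sub_le y (f x) (f x')).trans (by linarith [hsens x x' hN])
    rw [div_add' _ _ _ (ne_of_gt hΔS), div_le_div_iff_of_pos_right hΔS]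
    nlinarith
  have hint := integrable_laplaceDensity f ΔS ε hΔS hε x
  have hint' := integrable_laplaceDensity f ΔS ε hΔS hε x'
  calc (∫ y in Ω, laplaceDensity f ΔS ε x y)
      ≤ ∫ y in Ω, Real.exp ε * laplaceDensity f ΔS ε x' y := by
        refine setIntegral_mono_on hint.integrableOn
          (hint'.const_mul _).integrableOn hΩ (fun y _ => hpt y)
    _ = Real.exp ε * ∫ y in Ω, laplaceDensity f ΔS ε x' y := by
        rw [MeasureTheory.integral_const_mul]
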